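/- Let X = Σ_{i=1}^n a_i ε_i be a normalized finite Rademacher sum with a_1 ≥ a_2 ≥ ... ≥ a_n > 0 and n ≥ 7. If −a_1 − a_2 + a_3 + a_4 + a_5 + a_6 + a_7 ≥ 0.95 and −a_1 − a_2 − a_3 + a_4 + a_5 + a_6 + a_7 ≥ 0.175, then P(X ≥ 1/√5) ≥ 29/128. -/

import Mathlib

open Finset


/-- The probability that a finite Rademacher sum with weights `a` (signs chosen
independently and uniformly from `{-1,+1}`) satisfies the predicate `p`. -/

lemma fin_sm_le {r N : ℕ} {g : Fin r → Fin N} (hg : StrictMono g) (j : Fin r) :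
    (j : ℕ) ≤ (g j : ℕ) := by
  obtain ⟨v, hv⟩ := j
  induction v with
  | zero => simp
  | succ k ih =>
    have hk : k < r := by omega
    have h1 := ih hk
    have h2 : g ⟨k, hk⟩ < g ⟨k + 1, hv⟩ := hg (by simp [Fin.lt_def])
    rw [Fin.lt_def] at h2
    simp only [Fin.val_mk] at h1 h2 ⊢
    omega

lemma sum_mem_le (b : Fin 7 → ℝ) (hmono : ∀ i j : Fin 7, i ≤ j → b j ≤ b i)
    (hpos : ∀ i, 0 ≤ b i) (F : Finset (Fin 7)) (k : ℕ) (hF : F.card ≤ k) :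
    ∑ i ∈ F, b i ≤ ∑ j ∈ Finset.range k, (if h : j < 7 then b ⟨j, h⟩ else 0) := by
  set B : ℕ → ℝ := fun j => if h : j < 7 then b ⟨j, h⟩ else 0 with hB
  have hBnn : ∀ j, 0 ≤ B j := by
    intro j; simp only [hB]
    split
    · exact hpos _
    · exact le_rfl
  have hcard7 : F.card ≤ 7 := by
    have := F.card_le_univ; simpa using this
  set r := F.card with hr
  set f := F.orderEmbOfFin hr.symm with hf
  have hFeq : F = Finset.univ.map f.toEmbedding := by
    ext x
    simp only [Finset.mem_map, Finset.mem_univ, true_and]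
    constructor
    · intro hx
      have : x ∈ Set.range f := by rw [Finset.range_orderEmbOfFin]; exact hx
      obtain ⟨j, hj⟩ := this; exact ⟨j, hj⟩
    · rintro ⟨j, rfl⟩
      exact Finset.orderEmbOfFin_mem F hr.symm j
  calc ∑ i ∈ F, b i = ∑ j : Fin r, b (f j) := by rw [hFeq, Finset.sum_map]; rfl
    _ ≤ ∑ j : Fin r, B (j : ℕ) := by
        apply Finset.sum_le_sum
        intro j _
        have hlt : (j : ℕ) < 7 := lt_of_lt_of_le j.2 hcard7
        simp only [hB, dif_pos hlt]
        apply hmono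
        rw [Fin.le_def]
        exact fin_sm_le f.strictMono j
    _ = ∑ j ∈ Finset.range r, B j := Fin.sum_univ_eq_sum_range _ _
    _ ≤ ∑ j ∈ Finset.range k, B j := by
        apply Finset.sum_le_sum_of_subset_of_nonneg (Finset.range_subset_range.mpr hF)
        intro j _ _; exact hBnn j

noncomputable def radProb {ι : Type*} [Fintype ι] (a : ι → ℝ) (p : ℝ → Prop) : ℝ :=
  (Nat.card {ε : ι → Bool | p (∑ i, a i * (if ε i then (1 : ℝ) else -1))}) /
    2 ^ (Fintype.card ι)

theorem sqrt5_equality_case (n : ℕ) (hn : 7 ≤ n) (a : Fin n → ℝ)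
    (hmono : ∀ i j : Fin n, i ≤ j → a j ≤ a i) (hpos : ∀ i, 0 < a i)
    (hnorm : ∑ i, (a i) ^ 2 = 1)
    (h1 : -a ⟨0, by omega⟩ - a ⟨1, by omega⟩ + a ⟨2, by omega⟩ + a ⟨3, by omega⟩
        + a ⟨4, by omega⟩ + a ⟨5, by omega⟩ + a ⟨6, by omega⟩ ≥ 0.95)
    (h2 : -a ⟨0, by omega⟩ - a ⟨1, by omega⟩ - a ⟨2, by omega⟩ + a ⟨3, by omega⟩
        + a ⟨4, by omega⟩ + a ⟨5, by omega⟩ + a ⟨6, by omega⟩ ≥ 0.175) :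
    radProb a (fun x => x ≥ 1 / Real.sqrt 5) ≥ 29 / 128 := by
  classical
  set t : ℝ := 1 / Real.sqrt 5 with htdef
  -- basic numerics
  have h5 : Real.sqrt 5 ^ 2 = 5 := Real.sq_sqrt (by norm_num)
  have hs5pos : (0:ℝ) < Real.sqrt 5 := Real.sqrt_pos.mpr (by norm_num)
  have hs5ge2 : (2:ℝ) ≤ Real.sqrt 5 := by nlinarith
  have htle : t ≤ 1/2 := by
    rw [htdef, div_le_div_iff₀ hs5pos (by norm_num)]
    linarith
  have htpos : 0 < t := by positivity
  -- split index set
  obtain ⟨m, hm⟩ : ∃ m, n = 7 + m := ⟨n - 7, by omega⟩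
  set e : Fin 7 ⊕ Fin m ≃ Fin n := finSumFinEquiv.trans (finCongr hm.symm) with he
  set ai : ℕ → ℝ := fun k => if h : k < n then a ⟨k, h⟩ else 0 with hai
  set b : Fin 7 → ℝ := fun i => a (e (Sum.inl i)) with hbdef
  set w : Fin m → ℝ := fun i => a (e (Sum.inr i)) with hwdef
  have heval : ∀ i : Fin 7, ((e (Sum.inl i) : Fin n) : ℕ) = (i : ℕ) := by
    intro i; simp [he]
  have hb : ∀ i : Fin 7, b i = ai (i : ℕ) := by
    intro i
    have hlt : (i : ℕ) < n := by omega
    simp only [hai, dif_pos hlt]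
    show a (e (Sum.inl i)) = _
    exact congrArg a (Fin.ext (heval i))
  have hbmono : ∀ i j : Fin 7, i ≤ j → b j ≤ b i := by
    intro i j hij
    rw [hb i, hb j]
    have hi : (i:ℕ) < n := by omega
    have hj : (j:ℕ) < n := by omega
    simp only [hai, dif_pos hi, dif_pos hj]
    exact hmono _ _ (by rw [Fin.mk_le_mk]; exact hij)
  have hbpos : ∀ i : Fin 7, 0 ≤ b i := by
    intro i; rw [hb i]
    have hi : (i:ℕ) < n := by omega
    simp only [hai, dif_pos hi]
    exact (hpos _).le
  have hav : ∀ (k : ℕ) (h : k < n), ai k = a ⟨k, h⟩ := fun k h => dif_pos h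
  have h1' : (0.95:ℝ) ≤ -ai 0 - ai 1 + ai 2 + ai 3 + ai 4 + ai 5 + ai 6 := by
    rw [hav 0 (by omega), hav 1 (by omega), hav 2 (by omega), hav 3 (by omega),
      hav 4 (by omega), hav 5 (by omega), hav 6 (by omega)]
    exact h1
  have h2' : (0.175:ℝ) ≤ -ai 0 - ai 1 - ai 2 + ai 3 + ai 4 + ai 5 + ai 6 := by
    rw [hav 0 (by omega), hav 1 (by omega), hav 2 (by omega), hav 3 (by omega),
      hav 4 (by omega), hav 5 (by omega), hav 6 (by omega)]
    exact h2
  set S : (Fin 7 → Bool) → ℝ := fun σ => ∑ i, b i * (if σ i then (1:ℝ) else -1) with hSdef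
  set T : (Fin m → Bool) → ℝ := fun τ => ∑ i, w i * (if τ i then (1:ℝ) else -1) with hTdef
  have hS : ∀ σ, S σ = (∑ i, b i)
      - 2 * ∑ i ∈ Finset.univ.filter (fun i => σ i = false), b i := by
    intro σ
    have hterm : ∀ i : Fin 7, b i * (if σ i then (1:ℝ) else -1)
        = b i - 2 * (if σ i = false then b i else 0) := by
      intro i; cases h : σ i <;> simp [h] <;> ring
    calc S σ = ∑ i, (b i - 2 * (if σ i = false then b i else 0)) :=
          Finset.sum_congr rfl (fun i _ => hterm i)
      _ = (∑ i, b i) - 2 * ∑ i, (if σ i = false then b i else 0) := by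
          rw [Finset.sum_sub_distrib, Finset.mul_sum]
      _ = _ := by rw [Finset.sum_filter]
  have headsum : ∑ i : Fin 7, b i = ai 0 + ai 1 + ai 2 + ai 3 + ai 4 + ai 5 + ai 6 := by
    have c0 : ((0 : Fin 7) : ℕ) = 0 := rfl
    have c1 : ((1 : Fin 7) : ℕ) = 1 := rfl
    have c2 : ((2 : Fin 7) : ℕ) = 2 := rfl
    have c3 : ((3 : Fin 7) : ℕ) = 3 := rfl
    have c4 : ((4 : Fin 7) : ℕ) = 4 := rfl
    have c5 : ((5 : Fin 7) : ℕ) = 5 := rfl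
    have c6 : ((6 : Fin 7) : ℕ) = 6 := rfl
    rw [Fin.sum_univ_seven, hb, hb, hb, hb, hb, hb, hb, c0, c1, c2, c3, c4, c5, c6]
  have headA : ∀ σ : Fin 7 → Bool,
      (Finset.univ.filter (fun i => σ i = false)).card ≤ 2 → 0.95 ≤ S σ := by
    intro σ hσ
    have hle := sum_mem_le b hbmono hbpos _ 2 hσ
    have hr2 : ∑ j ∈ Finset.range 2, (if h : j < 7 then b ⟨j, h⟩ else 0) = ai 0 + ai 1 := by
      rw [Finset.sum_range_succ, Finset.sum_range_succ, Finset.sum_range_zero,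
        dif_pos (by norm_num : (0:ℕ) < 7), dif_pos (by norm_num : (1:ℕ) < 7), hb, hb]
      norm_num
    rw [hr2] at hle
    rw [hS σ, headsum]
    linarith
  have headB : ∀ σ : Fin 7 → Bool,
      (Finset.univ.filter (fun i => σ i = false)).card = 3 → 0.175 ≤ S σ := by
    intro σ hσ
    have hle := sum_mem_le b hbmono hbpos _ 3 hσ.le
    have hr3 : ∑ j ∈ Finset.range 3, (if h : j < 7 then b ⟨j, h⟩ else 0)
        = ai 0 + ai 1 + ai 2 := by
      rw [Finset.sum_range_succ, Finset.sum_range_succ, Finset.sum_range_succ,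
        Finset.sum_range_zero, dif_pos (by norm_num : (0:ℕ) < 7),
        dif_pos (by norm_num : (1:ℕ) < 7), dif_pos (by norm_num : (2:ℕ) < 7), hb, hb, hb]
      norm_num
    rw [hr3] at hle
    rw [hS σ, headsum]
    linarith
  have hTflip : ∀ τ : Fin m → Bool, T (fun i => !τ i) = -T τ := by
    intro τ
    show (∑ i, w i * (if !τ i then (1:ℝ) else -1)) = -∑ i, w i * (if τ i then (1:ℝ) else -1)
    rw [← Finset.sum_neg_distrib]
    apply Finset.sum_congr rfl
    intro i _
    cases h : τ i <;> simp [h]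
  -- thresholds
  set c : ℝ := 0.95 - t with hcdef
  set d : ℝ := t - 0.175 with hddef
  have hcd : d ≤ c := by rw [hcdef, hddef]; linarith
  set QA : Finset (Fin m → Bool) := Finset.univ.filter (fun τ => -c ≤ T τ) with hQA
  set QB : Finset (Fin m → Bool) := Finset.univ.filter (fun τ => d ≤ T τ) with hQB
  have hflipcard : (Finset.univ.filter (fun τ : Fin m → Bool => T τ < -c)).card
      = (Finset.univ.filter (fun τ : Fin m → Bool => c < T τ)).card := by
    apply Finset.card_equiv
      ⟨fun τ i => !τ i, fun τ i => !τ i, fun τ => by funext i; simp, fun τ => by funext i; simp⟩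
    intro τ
    simp only [Finset.mem_filter, Finset.mem_univ, true_and, Equiv.coe_fn_mk]
    rw [hTflip τ]
    constructor <;> intro <;> linarith
  have hcount : 2 ^ m ≤ QA.card + QB.card := by
    have huniv : (Finset.univ : Finset (Fin m → Bool)).card = 2 ^ m := by
      simp [Finset.card_univ]
    have hsplit : QA.card + (Finset.univ.filter (fun τ : Fin m → Bool => T τ < -c)).card
        = 2 ^ m := by
      have htot := Finset.card_filter_add_card_filter_not
        (s := (Finset.univ : Finset (Fin m → Bool))) (p := fun τ => -c ≤ T τ)
      have hnegeq : (Finset.univ.filter (fun a : Fin m → Bool => ¬ (-c ≤ T a)))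
          = Finset.univ.filter (fun τ : Fin m → Bool => T τ < -c) :=
        Finset.filter_congr (fun τ _ => by simp [not_le])
      rw [hnegeq] at htot
      rw [← huniv, hQA, ← htot]
    have hneg : (Finset.univ.filter (fun τ : Fin m → Bool => T τ < -c)).card ≤ QB.card := by
      rw [hflipcard]
      apply Finset.card_le_card
      intro τ hτ
      simp only [Finset.mem_filter, Finset.mem_univ, true_and, hQB] at hτ ⊢
      linarith
    omega
  set HA : Finset (Fin 7 → Bool) := Finset.univ.filter
    (fun σ => (Finset.univ.filter (fun i => σ i = false)).card ≤ 2) with hHA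
  set HB : Finset (Fin 7 → Bool) := Finset.univ.filter
    (fun σ => (Finset.univ.filter (fun i => σ i = false)).card = 3) with hHB
  have hHAcard : HA.card = 29 := by rw [hHA]; decide
  have hHBcard : HB.card = 35 := by rw [hHB]; decide
  set P : Finset ((Fin 7 → Bool) × (Fin m → Bool)) :=
    Finset.univ.filter (fun x => S x.1 + T x.2 ≥ t) with hP
  have hGoodsub : HA ×ˢ QA ∪ HB ×ˢ QB ⊆ P := by
    intro x hx
    rw [Finset.mem_union] at hx
    simp only [hP, Finset.mem_filter, Finset.mem_univ, true_and, ge_iff_le]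
    rcases hx with hx | hx
    · rw [Finset.mem_product] at hx
      obtain ⟨hx1, hx2⟩ := hx
      rw [hHA, Finset.mem_filter] at hx1
      rw [hQA, Finset.mem_filter] at hx2
      have hA := headA x.1 hx1.2
      have hT := hx2.2
      rw [hcdef] at hT
      linarith
    · rw [Finset.mem_product] at hx
      obtain ⟨hx1, hx2⟩ := hx
      rw [hHB, Finset.mem_filter] at hx1
      rw [hQB, Finset.mem_filter] at hx2
      have hB := headB x.1 hx1.2
      have hT := hx2.2
      rw [hddef] at hT
      linarith
  have hdisj : Disjoint (HA ×ˢ QA) (HB ×ˢ QB) := by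
    rw [Finset.disjoint_left]
    intro x hx hx'
    rw [Finset.mem_product] at hx hx'
    rw [hHA, Finset.mem_filter] at hx
    rw [hHB, Finset.mem_filter] at hx'
    have := hx.1.2
    have := hx'.1.2
    omega
  have hPbig : 29 * 2 ^ m ≤ P.card := by
    have hGc : (HA ×ˢ QA ∪ HB ×ˢ QB).card = 29 * QA.card + 35 * QB.card := by
      rw [Finset.card_union_of_disjoint hdisj, Finset.card_product, Finset.card_product,
        hHAcard, hHBcard]
    have hle : (HA ×ˢ QA ∪ HB ×ˢ QB).card ≤ P.card := Finset.card_le_card hGoodsub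
    rw [hGc] at hle
    have h2m := hcount
    set pm := 2 ^ m
    omega
  -- transfer to Fin n → Bool
  set E : ((Fin 7 → Bool) × (Fin m → Bool)) ≃ (Fin n → Bool) :=
    { toFun := fun x i => Sum.elim x.1 x.2 (e.symm i)
      invFun := fun ε => (fun i => ε (e (Sum.inl i)), fun i => ε (e (Sum.inr i)))
      left_inv := by
        intro x
        apply Prod.ext <;> funext i <;> simp
      right_inv := by
        intro ε
        funext i
        obtain ⟨j, rfl⟩ := e.surjective i
        simp only [Equiv.symm_apply_apply]
        cases j <;> simp }
    with hEdef
  have hX : ∀ x : (Fin 7 → Bool) × (Fin m → Bool),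
      (∑ i, a i * (if (E x) i then (1:ℝ) else -1)) = S x.1 + T x.2 := by
    intro x
    have hsum := Fintype.sum_equiv e
      (fun j => a (e j) * (if Sum.elim x.1 x.2 j then (1:ℝ) else -1))
      (fun i => a i * (if (E x) i then (1:ℝ) else -1))
      (by
        intro j
        simp only [hEdef, Equiv.coe_fn_mk, Equiv.symm_apply_apply])
    rw [← hsum, Fintype.sum_sum_type]
    simp only [Sum.elim_inl, Sum.elim_inr]
    rfl
  have hNcard : P.card = (Finset.univ.filter
      (fun ε : Fin n → Bool => (∑ i, a i * (if ε i then (1:ℝ) else -1)) ≥ t)).card := by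
    apply Finset.card_equiv E
    intro x
    simp only [hP, Finset.mem_filter, Finset.mem_univ, true_and, hX x, ge_iff_le]
  have hsetcard : Nat.card {ε : Fin n → Bool |
      (∑ i, a i * (if ε i then (1:ℝ) else -1)) ≥ t} = (Finset.univ.filter
      (fun ε : Fin n → Bool => (∑ i, a i * (if ε i then (1:ℝ) else -1)) ≥ t)).card := by
    rw [Nat.card_coe_set_eq, Set.ncard_eq_toFinset_card', Set.toFinset_setOf]
  show ((Nat.card {ε : Fin n → Bool |
      (∑ i, a i * (if ε i then (1:ℝ) else -1)) ≥ t} : ℕ) : ℝ)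
      / 2 ^ (Fintype.card (Fin n)) ≥ 29 / 128
  rw [hsetcard, ← hNcard, Fintype.card_fin]
  rw [ge_iff_le, div_le_div_iff₀ (by norm_num) (by positivity)]
  have h2n : (2:ℝ) ^ n = 128 * 2 ^ m := by rw [hm, pow_add]; norm_num
  have hPR : (29 * 2 ^ m : ℝ) ≤ (P.card : ℝ) := by exact_mod_cast hPbig
  rw [h2n]
  nlinarith [hPR]
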